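/- The shuffle-type product σ ∇ τ = Σ_{π ∈ Sh(p,q)} sgn(π) (σ ⊙ τ)·π^{-1} on ⊕_n K[Σ_n], where σ ∈ Σ_p, τ ∈ Σ_q, ⊙ is concatenation, and Sh(p,q) is the set of (p,q)-shuffles acting on the right, is associative. -/

import Mathlib

/-- A word `w` (in one-line notation) is a permutation of `{1, …, w.length}`. -/
def IsPermWord (w : List ℕ) : Prop := w.Perm (List.range' 1 w.length)

/-- The concatenation product `σ ⊙ τ` of permutation words. -/
def cprodw (σ τ : List ℕ) : List ℕ := σ ++ τ.map (· + σ.length)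

/-- The inverse of a permutation word. -/
def invw (w : List ℕ) : List ℕ :=
  (List.range w.length).map (fun i => w.idxOf (i + 1) + 1)

/-- Composition of permutation words: `(ρ ∘ π)(i) = ρ(π(i))`. -/
def compw (ρ π : List ℕ) : List ℕ :=
  (List.range π.length).map (fun i => ρ.getD (π.getD i 0 - 1) 0)

/-- Number of inversions of a word. -/
def inversions (w : List ℕ) : ℕ :=
  ((Finset.range w.length ×ˢ Finset.range w.length).filter
    (fun p => p.1 < p.2 ∧ w.getD p.2 0 < w.getD p.1 0)).card

/-- The signature of a permutation word. -/
def sgnw (w : List ℕ) : ℤ := (-1) ^ (inversions w)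

/-- The set of `(p,q)`-shuffles: permutation words `π` of `{1,…,p+q}` with
`π(1) < ⋯ < π(p)` and `π(p+1) < ⋯ < π(p+q)`. -/
def shuffles (p q : ℕ) : Finset (List ℕ) :=
  ((List.range' 1 (p + q)).permutations.toFinset).filter
    (fun w => (w.take p).IsChain (· < ·) ∧ (w.drop p).IsChain (· < ·))

/-- The shuffle-type product on basis words:
`σ ∇ τ = Σ_{π ∈ Sh(p,q)} sgn(π) (σ ⊙ τ) ∘ π⁻¹`. -/
noncomputable def shufF (K : Type*) [Field K] (σ τ : List ℕ) : List ℕ →₀ K :=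
  ∑ π ∈ shuffles σ.length τ.length,
    sgnw π • Finsupp.single (compw (cprodw σ τ) (invw π)) (1 : K)

/-- The bilinear extension of `∇` to the free `K`-vector space on words. -/
noncomputable def shufL (K : Type*) [Field K] :
    (List ℕ →₀ K) →ₗ[K] (List ℕ →₀ K) →ₗ[K] (List ℕ →₀ K) :=
  Finsupp.lsum K fun σ =>
    (LinearMap.id : K →ₗ[K] K).smulRight
      (Finsupp.lsum K fun τ => (LinearMap.id : K →ₗ[K] K).smulRight (shufF K σ τ))

namespace SPA

open List

/-! ### Basic list facts -/

lemma perm_length {w : List ℕ} {n : ℕ} (h : w.Perm (List.range' 1 n)) : w.length = n := by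
  simpa using h.length_eq

lemma perm_mem_bound {w : List ℕ} {n : ℕ} (h : w.Perm (List.range' 1 n)) {x : ℕ}
    (hx : x ∈ w) : 1 ≤ x ∧ x < n + 1 := by
  have := h.mem_iff.mp hx
  simp only [List.mem_range'_1] at this
  omega

lemma perm_nodup {w : List ℕ} {n : ℕ} (h : w.Perm (List.range' 1 n)) : w.Nodup :=
  h.symm.nodup (List.nodup_range' (s := 1) (n := n))

lemma chain'_map_sub_one : ∀ {s : List ℕ}, (∀ x ∈ s, 1 ≤ x) → s.IsChain (· < ·) →
    (s.map (· - 1)).IsChain (· < ·)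
  | [], _, _ => by simp
  | [_], _, _ => by simp
  | a :: b :: t, hmem, hc => by
    rcases List.isChain_cons_cons.mp hc with ⟨hab, ht⟩
    have ha : 1 ≤ a := hmem a (by simp)
    simp only [List.map_cons]
    refine List.isChain_cons_cons.mpr ⟨by omega, ?_⟩
    have := chain'_map_sub_one (fun x hx => hmem x (by simp [hx])) ht
    simpa using this

lemma indexOf_map_add_one : ∀ (l : List ℕ) (k : ℕ),
    (l.map (· + 1)).idxOf (k + 1) = l.idxOf k
  | [], _ => rfl
  | a :: t, k => by
    by_cases h : a = k
    · subst h; simp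
    · rw [List.map_cons, List.idxOf_cons_ne _ (by omega), List.idxOf_cons_ne _ h,
        indexOf_map_add_one]

lemma map_add_one_range' (m : ℕ) : (List.range' 1 m).map (· + 1) = List.range' 2 m := by
  apply List.ext_getElem (by simp)
  intro i h1 h2
  simp [List.getElem_range']
  omega

lemma map_sub_one_range' (m : ℕ) : (List.range' 2 m).map (· - 1) = List.range' 1 m := by
  apply List.ext_getElem (by simp)
  intro i h1 h2
  simp [List.getElem_range']

lemma chain'_lt_range' (s n : ℕ) : (List.range' s n).IsChain (· < ·) := by
  rw [List.isChain_iff_pairwise, List.pairwise_iff_getElem]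
  intro i j hi hj hij
  simp only [List.getElem_range']
  omega

lemma perm_sorted_eq {w : List ℕ} {n : ℕ} (h : w.Perm (List.range' 1 n))
    (hs : w.IsChain (· < ·)) : w = List.range' 1 n := by
  haveI : IsAntisymm ℕ (· < ·) := ⟨fun a b h1 h2 => absurd h2 (lt_asymm h1)⟩
  exact List.Perm.eq_of_pairwise (fun a b _ _ h1 h2 => absurd h2 (lt_asymm h1)) (List.isChain_iff_pairwise.mp hs)
    (List.isChain_iff_pairwise.mp (chain'_lt_range' 1 n)) h

/-! ### `invw`, `compw` basics -/

lemma invw_length (w : List ℕ) : (invw w).length = w.length := by simp [invw]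

lemma invw_getD {w : List ℕ} {i : ℕ} (h : i < w.length) :
    (invw w).getD i 0 = w.idxOf (i + 1) + 1 := by
  rw [List.getD_eq_getElem _ _ (by simpa [invw_length] using h)]
  simp [invw]

lemma compw_length (ρ π : List ℕ) : (compw ρ π).length = π.length := by simp [compw]

lemma compw_invw_getD (ρ π : List ℕ) {i : ℕ} (h : i < π.length) :
    (compw ρ (invw π)).getD i 0 = ρ.getD (π.idxOf (i + 1)) 0 := by
  have h' : i < (compw ρ (invw π)).length := by
    simpa [compw_length, invw_length] using h
  rw [List.getD_eq_getElem _ _ h']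
  simp only [compw, List.getElem_map, List.getElem_range]
  rw [invw_getD h]
  simp

lemma invw_self (n : ℕ) : invw (List.range' 1 n) = List.range' 1 n := by
  apply List.ext_getElem (by simp [invw_length])
  intro i h1 h2
  have hi : i < n := by simpa using h2
  have h3 : (List.range' 1 n)[i]'(by simpa using hi) = i + 1 := by
    simp [List.getElem_range']; omega
  have h4 : (List.range' 1 n).idxOf (i + 1) = i := by
    rw [← h3, List.Nodup.idxOf_getElem (List.nodup_range' (s := 1) (n := n))]
  simp only [invw, List.getElem_map, List.getElem_range, h4]
  simp [List.getElem_range']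
  omega

lemma compw_self (w : List ℕ) : compw w (List.range' 1 w.length) = w := by
  apply List.ext_getElem (by simp [compw_length])
  intro i h1 h2
  have hgd : (List.range' 1 w.length).getD i 0 = i + 1 := by
    rw [List.getD_eq_getElem _ _ (by simpa using h2)]
    simp [List.getElem_range']; omega
  simp only [compw, List.getElem_map, List.getElem_range, hgd, Nat.add_sub_cancel]
  exact List.getD_eq_getElem _ _ h2

/-! ### Inversions -/

lemma inversions_range' (n : ℕ) : inversions (List.range' 1 n) = 0 := by
  unfold inversions
  rw [Finset.card_eq_zero, Finset.filter_eq_empty_iff]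
  rintro ⟨i, j⟩ hm
  simp only [Finset.mem_product, Finset.mem_range, List.length_range'] at hm
  rintro ⟨hij, hlt⟩
  rw [List.getD_eq_getElem _ _ (by simpa using hm.2),
      List.getD_eq_getElem _ _ (by simpa using hm.1)] at hlt
  simp [List.getElem_range'] at hlt
  omega

lemma inversions_map_add_one (l : List ℕ) : inversions (l.map (· + 1)) = inversions l := by
  unfold inversions
  rw [List.length_map]
  congr 1
  apply Finset.filter_congr
  rintro ⟨i, j⟩ hij
  simp only [Finset.mem_product, Finset.mem_range] at hij
  obtain ⟨hi, hj⟩ := hij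
  dsimp only
  rw [List.getD_eq_getElem _ _ (by simpa using hj), List.getD_eq_getElem _ _ (by simpa using hi),
    List.getElem_map, List.getElem_map, ← List.getD_eq_getElem l 0 hj,
    ← List.getD_eq_getElem l 0 hi]
  constructor
  · rintro ⟨h1, h2⟩; exact ⟨h1, by omega⟩
  · rintro ⟨h1, h2⟩; exact ⟨h1, by omega⟩

lemma inversions_cons_one (t : List ℕ) (ht : ∀ x ∈ t, 1 ≤ x) :
    inversions (1 :: t) = inversions t := by
  classical
  have htD : ∀ j, j < t.length → 1 ≤ t.getD j 0 := by
    intro j hj; rw [List.getD_eq_getElem _ _ hj]; exact ht _ (List.getElem_mem _)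
  have hge1 : ∀ i j : ℕ, i < t.length + 1 → j < t.length + 1 → i < j →
      (1 :: t).getD j 0 < (1 :: t).getD i 0 → 1 ≤ i := by
    intro i j hi hj hij hlt
    by_contra hcon
    have hi0 : i = 0 := by omega
    subst hi0
    obtain ⟨j', rfl⟩ : ∃ j', j = j' + 1 := ⟨j - 1, by omega⟩
    have hlt' : t.getD j' 0 < 1 := by simpa using hlt
    have := htD j' (by omega)
    omega
  unfold inversions
  simp only [List.length_cons]
  apply Finset.card_bij' (i := fun pr _ => (pr.1 - 1, pr.2 - 1))
    (j := fun pr _ => (pr.1 + 1, pr.2 + 1))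
  case left_inv =>
    rintro ⟨i, j⟩ hm
    simp only [Finset.mem_filter, Finset.mem_product, Finset.mem_range] at hm
    obtain ⟨⟨hi, hj⟩, hij, hlt⟩ := hm
    have h1 : 1 ≤ i := hge1 i j hi hj hij hlt
    simp only [Prod.mk.injEq]
    constructor <;> omega
  case right_inv =>
    rintro ⟨i, j⟩ _
    simp
  case hi =>
    rintro ⟨i, j⟩ hm
    simp only [Finset.mem_filter, Finset.mem_product, Finset.mem_range] at hm ⊢
    obtain ⟨⟨hi, hj⟩, hij, hlt⟩ := hm
    have h1 : 1 ≤ i := hge1 i j hi hj hij hlt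
    obtain ⟨i', rfl⟩ : ∃ i', i = i' + 1 := ⟨i - 1, by omega⟩
    obtain ⟨j', rfl⟩ : ∃ j', j = j' + 1 := ⟨j - 1, by omega⟩
    have hlt' : t.getD j' 0 < t.getD i' 0 := by simpa using hlt
    refine ⟨⟨by omega, by omega⟩, by omega, by simpa using hlt'⟩
  case hj =>
    rintro ⟨i, j⟩ hm
    simp only [Finset.mem_filter, Finset.mem_product, Finset.mem_range] at hm ⊢
    obtain ⟨⟨hi, hj⟩, hij, hlt⟩ := hm
    refine ⟨⟨by omega, by omega⟩, by omega, by simpa using hlt⟩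

lemma inversions_insert_one (A B : List ℕ) (h2 : ∀ x ∈ A ++ B, 2 ≤ x) :
    inversions (A ++ 1 :: B) = inversions (A ++ B) + A.length := by
  classical
  set p := A.length with hp
  set w := A ++ 1 :: B with hwdef
  set u := A ++ B with hudef
  have hwl : w.length = p + B.length + 1 := by simp [hwdef, hp]; omega
  have hul : u.length = p + B.length := by simp [hudef, hp]
  set N := p + B.length + 1 with hN
  have hwp : w.getD p 0 = 1 := by
    rw [hwdef, List.getD_append_right _ _ _ _ (by omega)]
    simp [hp]
  have hwlt : ∀ t, t < p → w.getD t 0 = A.getD t 0 := by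
    intro t ht; rw [hwdef, List.getD_append _ _ _ _ (by omega)]
  have hwgt : ∀ t, p < t → w.getD t 0 = B.getD (t - p - 1) 0 := by
    intro t ht
    rw [hwdef, List.getD_append_right _ _ _ _ (by omega)]
    have h3 : t - A.length = (t - p - 1) + 1 := by omega
    rw [h3, List.getD_cons_succ]
    congr 1 <;> omega
  have hult : ∀ t, t < p → u.getD t 0 = A.getD t 0 := fun t ht => by
    rw [hudef, List.getD_append _ _ _ _ (by omega)]
  have hugt : ∀ t, p ≤ t → u.getD t 0 = B.getD (t - p) 0 := fun t ht => by
    rw [hudef, List.getD_append_right _ _ _ _ (by omega)]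
  have hw2 : ∀ t, t < N → t ≠ p → 2 ≤ w.getD t 0 := by
    intro t h1 h2'
    rcases lt_or_gt_of_ne h2' with h | h
    · rw [hwlt t h]
      rw [List.getD_eq_getElem _ _ (by omega)]
      exact h2 _ (List.mem_append_left _ (List.getElem_mem _))
    · rw [hwgt t h]
      have hb : t - p - 1 < B.length := by omega
      rw [List.getD_eq_getElem _ _ hb]
      exact h2 _ (List.mem_append_right _ (List.getElem_mem _))
  have hkey : ∀ t, t < N → t ≠ p → w.getD t 0 = u.getD (if t < p then t else t - 1) 0 := by
    intro t h1 h2'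
    by_cases h : t < p
    · rw [if_pos h, hwlt t h, hult t h]
    · rw [if_neg h, hwgt t (by omega), hugt (t - 1) (by omega)]
      congr 1 <;> omega
  have hkey2 : ∀ t, t < p + B.length → w.getD (if t < p then t else t + 1) 0 = u.getD t 0 := by
    intro t h1
    by_cases h : t < p
    · rw [if_pos h, hwlt t h, hult t h]
    · rw [if_neg h, hwgt (t + 1) (by omega), hugt t (by omega)]
      congr 1 <;> omega
  have e1 : inversions w = ((Finset.range N ×ˢ Finset.range N).filter
      (fun pr : ℕ × ℕ => pr.1 < pr.2 ∧ w.getD pr.2 0 < w.getD pr.1 0)).card := by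
    unfold inversions
    rw [hwl]
  have hc2 : (((Finset.range N ×ˢ Finset.range N).filter
      (fun pr : ℕ × ℕ => pr.1 < pr.2 ∧ w.getD pr.2 0 < w.getD pr.1 0)).filter
        (fun pr => pr.2 = p)).card = p := by
    conv_rhs => rw [← Finset.card_range p]
    apply Finset.card_bij' (i := fun pr _ => pr.1) (j := fun t _ => (t, p))
    case left_inv =>
      rintro ⟨i, j⟩ hm
      simp only [Finset.mem_filter, Finset.mem_product, Finset.mem_range] at hm
      obtain ⟨-, hjp⟩ := hm
      simp only [Prod.mk.injEq]
      exact ⟨trivial, hjp.symm⟩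
    case right_inv =>
      intro t _
      rfl
    case hi =>
      rintro ⟨i, j⟩ hm
      simp only [Finset.mem_filter, Finset.mem_product, Finset.mem_range] at hm ⊢
      obtain ⟨⟨⟨hi, hj⟩, hij, hlt⟩, hjp⟩ := hm
      omega
    case hj =>
      intro t ht
      simp only [Finset.mem_range] at ht
      simp only [Finset.mem_filter, Finset.mem_product, Finset.mem_range]
      refine ⟨⟨⟨by omega, by omega⟩, by omega, ?_⟩, trivial⟩
      rw [hwp]
      have := hw2 t (by omega) (by omega)
      omega
  have hc1 : (((Finset.range N ×ˢ Finset.range N).filter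
      (fun pr : ℕ × ℕ => pr.1 < pr.2 ∧ w.getD pr.2 0 < w.getD pr.1 0)).filter
        (fun pr => ¬pr.2 = p)).card = inversions u := by
    unfold inversions
    rw [hul]
    apply Finset.card_bij'
      (i := fun pr _ => ((if pr.1 < p then pr.1 else pr.1 - 1),
        (if pr.2 < p then pr.2 else pr.2 - 1)))
      (j := fun pr _ => ((if pr.1 < p then pr.1 else pr.1 + 1),
        (if pr.2 < p then pr.2 else pr.2 + 1)))
    case left_inv =>
      rintro ⟨i, j⟩ hm
      simp only [Finset.mem_filter, Finset.mem_product, Finset.mem_range] at hm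
      obtain ⟨⟨⟨hi, hj⟩, hij, hlt⟩, hjp⟩ := hm
      have hip : i ≠ p := by
        intro hcon
        subst hcon
        rw [hwp] at hlt
        have := hw2 j hj hjp
        omega
      simp only [Prod.mk.injEq]
      constructor
      · split_ifs <;> omega
      · split_ifs <;> omega
    case right_inv =>
      rintro ⟨i, j⟩ hm
      simp only [Finset.mem_filter, Finset.mem_product, Finset.mem_range] at hm
      obtain ⟨⟨hi, hj⟩, hij, hlt⟩ := hm
      simp only [Prod.mk.injEq]
      constructor
      · split_ifs <;> omega
      · split_ifs <;> omega
    case hi =>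
      rintro ⟨i, j⟩ hm
      simp only [Finset.mem_filter, Finset.mem_product, Finset.mem_range] at hm ⊢
      obtain ⟨⟨⟨hi, hj⟩, hij, hlt⟩, hjp⟩ := hm
      have hip : i ≠ p := by
        intro hcon
        subst hcon
        rw [hwp] at hlt
        have := hw2 j hj hjp
        omega
      refine ⟨⟨?_, ?_⟩, ?_, ?_⟩
      · split_ifs <;> omega
      · split_ifs <;> omega
      · split_ifs <;> omega
      · rw [← hkey i hi hip, ← hkey j hj hjp]
        exact hlt
    case hj =>
      rintro ⟨i, j⟩ hm
      simp only [Finset.mem_filter, Finset.mem_product, Finset.mem_range] at hm ⊢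
      obtain ⟨⟨hi, hj⟩, hij, hlt⟩ := hm
      refine ⟨⟨⟨?_, ?_⟩, ?_, ?_⟩, ?_⟩
      · split_ifs <;> omega
      · split_ifs <;> omega
      · split_ifs <;> omega
      · rw [hkey2 i (by omega), hkey2 j (by omega)]
        exact hlt
      · split_ifs <;> omega
  rw [e1, ← Finset.card_filter_add_card_filter_not
    (p := fun pr : ℕ × ℕ => pr.2 = p), hc1, hc2]
  omega

/-! ### The recursive signed shuffle sum -/

noncomputable def cnsF (K : Type*) [Field K] (a : ℕ) (f : List ℕ →₀ K) : List ℕ →₀ K :=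
  Finsupp.mapDomain (a :: ·) f

noncomputable def cnsHom (K : Type*) [Field K] (a : ℕ) : (List ℕ →₀ K) →+ (List ℕ →₀ K) where
  toFun := cnsF K a
  map_zero' := Finsupp.mapDomain_zero
  map_add' _ _ := Finsupp.mapDomain_add

lemma cnsF_add (K : Type*) [Field K] (a : ℕ) (f g : List ℕ →₀ K) :
    cnsF K a (f + g) = cnsF K a f + cnsF K a g := Finsupp.mapDomain_add

lemma cnsF_smul (K : Type*) [Field K] (a : ℕ) (c : K) (f : List ℕ →₀ K) :
    cnsF K a (c • f) = c • cnsF K a f := Finsupp.mapDomain_smul c f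

lemma cnsF_single (K : Type*) [Field K] (a : ℕ) (w : List ℕ) (c : K) :
    cnsF K a (Finsupp.single w c) = Finsupp.single (a :: w) c := Finsupp.mapDomain_single

noncomputable def ssum (K : Type*) [Field K] : List ℕ → List ℕ → (List ℕ →₀ K)
  | [], m => Finsupp.single m 1
  | a :: l, [] => Finsupp.single (a :: l) 1
  | a :: l, b :: m =>
    cnsF K a (ssum K l (b :: m)) + ((-1 : K) ^ (l.length + 1)) • cnsF K b (ssum K (a :: l) m)
  termination_by x y => x.length + y.length
  decreasing_by all_goals (simp <;> omega)

lemma cnsF_finset_sum (K : Type*) [Field K] (a : ℕ) {ι : Type*} (s : Finset ι)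
    (g : ι → (List ℕ →₀ K)) :
    cnsF K a (∑ i ∈ s, g i) = ∑ i ∈ s, cnsF K a (g i) :=
  map_sum (cnsHom K a) g s

lemma ssum_nil_left (K : Type*) [Field K] (m : List ℕ) :
    ssum K [] m = Finsupp.single m 1 := by simp [ssum]

lemma ssum_nil_right (K : Type*) [Field K] : ∀ l : List ℕ, ssum K l [] = Finsupp.single l 1
  | [] => by simp [ssum]
  | a :: l => by simp [ssum]

lemma ssum_cons_cons (K : Type*) [Field K] (a b : ℕ) (l m : List ℕ) :
    ssum K (a :: l) (b :: m) =
      cnsF K a (ssum K l (b :: m)) + ((-1 : K) ^ (l.length + 1)) • cnsF K b (ssum K (a :: l) m) := by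
  simp [ssum]

/-! ### Shuffle sets -/

lemma mem_shuffles {p q : ℕ} {w : List ℕ} :
    w ∈ shuffles p q ↔ w.Perm (List.range' 1 (p + q)) ∧
      (w.take p).IsChain (· < ·) ∧ (w.drop p).IsChain (· < ·) := by
  constructor
  · intro h
    rw [shuffles, Finset.mem_filter] at h
    exact ⟨List.mem_permutations.mp (List.mem_toFinset.mp h.1), h.2.1, h.2.2⟩
  · rintro ⟨h1, h2, h3⟩
    rw [shuffles, Finset.mem_filter]
    exact ⟨List.mem_toFinset.mpr (List.mem_permutations.mpr h1), h2, h3⟩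

lemma shuffles_zero_left (q : ℕ) : shuffles 0 q = {List.range' 1 q} := by
  ext w
  rw [mem_shuffles, Finset.mem_singleton]
  constructor
  · rintro ⟨h1, -, h3⟩
    have h1' : w.Perm (List.range' 1 q) := by simpa using h1
    exact perm_sorted_eq h1' (by simpa using h3)
  · rintro rfl
    refine ⟨by simp, by simp, by simpa using chain'_lt_range' 1 q⟩

lemma shuffles_zero_right (p : ℕ) : shuffles p 0 = {List.range' 1 p} := by
  ext w
  rw [mem_shuffles, Finset.mem_singleton]
  constructor
  · rintro ⟨h1, h2, -⟩
    have h1' : w.Perm (List.range' 1 p) := by simpa using h1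
    have hlen : w.length = p := perm_length h1'
    have ht : w.take p = w := List.take_of_length_le (by omega)
    rw [ht] at h2
    exact perm_sorted_eq h1' h2
  · rintro rfl
    have hlen : (List.range' 1 p).length = p := by simp
    refine ⟨by simp, ?_, ?_⟩
    · rw [List.take_of_length_le (by omega)]
      exact chain'_lt_range' 1 p
    · rw [List.drop_eq_nil_of_le (by omega)]
      simp

lemma e1_mem {p q : ℕ} {π : List ℕ} (hπ : π ∈ shuffles p (q + 1)) :
    (1 :: π.map (· + 1)) ∈ shuffles (p + 1) (q + 1) := by
  obtain ⟨hperm, hc1, hc2⟩ := mem_shuffles.mp hπ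
  refine mem_shuffles.mpr ⟨?_, ?_, ?_⟩
  · have h1 : (π.map (· + 1)).Perm (List.range' 2 (p + (q + 1))) := by
      have := hperm.map (· + 1)
      rwa [map_add_one_range'] at this
    rw [show p + 1 + (q + 1) = (p + (q + 1)) + 1 from by omega, List.range'_succ]
    exact h1.cons 1
  · rw [List.take_succ_cons, ← List.map_take]
    refine List.isChain_cons.mpr ⟨?_, (List.isChain_map _).mpr (hc1.imp fun a b h => by omega)⟩
    intro y hy
    obtain ⟨x, hx, rfl⟩ := List.mem_map.mp (List.mem_of_mem_head? hy)
    have hb := (perm_mem_bound hperm (List.mem_of_mem_take hx)).1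
    show (1 : ℕ) < x + 1
    omega
  · rw [List.drop_succ_cons, ← List.map_drop]
    exact (List.isChain_map _).mpr (hc2.imp fun a b h => by omega)

lemma e2_mem {p q : ℕ} {π : List ℕ} (hπ : π ∈ shuffles (p + 1) q) :
    ((π.map (· + 1)).take (p + 1) ++ 1 :: (π.map (· + 1)).drop (p + 1)) ∈
      shuffles (p + 1) (q + 1) := by
  obtain ⟨hperm, hc1, hc2⟩ := mem_shuffles.mp hπ
  have hlen : π.length = p + 1 + q := perm_length hperm
  have hul : (π.map (· + 1)).length = p + 1 + q := by simp [hlen]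
  have htl : ((π.map (· + 1)).take (p + 1)).length = p + 1 := by
    simp [hul]
  refine mem_shuffles.mpr ⟨?_, ?_, ?_⟩
  · have h1 : (π.map (· + 1)).Perm (List.range' 2 (p + 1 + q)) := by
      have := hperm.map (· + 1)
      rwa [map_add_one_range'] at this
    have h2 : ((π.map (· + 1)).take (p + 1) ++ 1 :: (π.map (· + 1)).drop (p + 1)).Perm
        (1 :: π.map (· + 1)) := by
      have := List.perm_middle (a := 1) (l₁ := (π.map (· + 1)).take (p + 1))
        (l₂ := (π.map (· + 1)).drop (p + 1))
      rwa [List.take_append_drop] at this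
    refine h2.trans ?_
    rw [show p + 1 + (q + 1) = (p + 1 + q) + 1 from by omega, List.range'_succ]
    exact h1.cons 1
  · rw [List.take_left' htl, ← List.map_take]
    exact (List.isChain_map _).mpr (hc1.imp fun a b h => by omega)
  · rw [List.drop_left' htl, ← List.map_drop]
    refine List.isChain_cons.mpr ⟨?_, (List.isChain_map _).mpr (hc2.imp fun a b h => by omega)⟩
    intro y hy
    obtain ⟨x, hx, rfl⟩ := List.mem_map.mp (List.mem_of_mem_head? hy)
    have hb := (perm_mem_bound hperm (List.mem_of_mem_drop hx)).1
    show (1 : ℕ) < x + 1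
    omega

lemma getD_take {l : List ℕ} {n k : ℕ} (h1 : k < n) (h2 : k < l.length) :
    (l.take n).getD k 0 = l.getD k 0 := by
  rw [List.getD_eq_getElem _ _ (by simp [List.length_take]; omega),
    List.getD_eq_getElem _ _ h2]
  simp

lemma getD_drop {l : List ℕ} {n k : ℕ} (h : n + k < l.length) :
    (l.drop n).getD k 0 = l.getD (n + k) 0 := by
  rw [List.getD_eq_getElem _ _ (by simp [List.length_drop]; omega),
    List.getD_eq_getElem _ _ h]
  simp

lemma chain'_pair_of_getElem {w : List ℕ} (hc : w.IsChain (· < ·)) {i j : ℕ}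
    (hi : i < w.length) (hj : j < w.length) (hij : i < j) : w[i]'hi < w[j]'hj := by
  rw [List.isChain_iff_pairwise, List.pairwise_iff_getElem] at hc
  exact hc i j hi hj hij

lemma chain'_getD_lt {w : List ℕ} (hc : w.IsChain (· < ·)) {i j : ℕ}
    (hij : i < j) (hj : j < w.length) : w.getD i 0 < w.getD j 0 := by
  rw [List.getD_eq_getElem _ _ (by omega), List.getD_eq_getElem _ _ hj]
  exact chain'_pair_of_getElem hc _ _ hij

lemma shuffles_succ_subset {p q : ℕ} {ρ : List ℕ} (hρ : ρ ∈ shuffles (p + 1) (q + 1)) :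
    (∃ π ∈ shuffles p (q + 1), ρ = 1 :: π.map (· + 1)) ∨
    (∃ π ∈ shuffles (p + 1) q,
      ρ = (π.map (· + 1)).take (p + 1) ++ 1 :: (π.map (· + 1)).drop (p + 1)) := by
  obtain ⟨hperm, hc1, hc2⟩ := mem_shuffles.mp hρ
  have hlen : ρ.length = p + 1 + (q + 1) := perm_length hperm
  have hnodup : ρ.Nodup := perm_nodup hperm
  have hmem1 : (1 : ℕ) ∈ ρ := by
    rw [hperm.mem_iff]
    simp [List.mem_range'_1]
  obtain ⟨i, hi, hρi⟩ := List.getElem_of_mem hmem1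
  have hbound : ∀ k, k < ρ.length → 1 ≤ ρ.getD k 0 := by
    intro k hk
    rw [List.getD_eq_getElem _ _ hk]
    exact (perm_mem_bound hperm (List.getElem_mem _)).1
  have hρD : ρ.getD i 0 = 1 := by
    rw [List.getD_eq_getElem _ _ hi]
    exact hρi
  have hcases : i = 0 ∨ i = p + 1 := by
    by_contra hcon
    push_neg at hcon
    obtain ⟨h0, hp1⟩ := hcon
    by_cases hle : i < p + 1
    · have h1 : (ρ.take (p + 1)).getD (i - 1) 0 < (ρ.take (p + 1)).getD i 0 :=
        chain'_getD_lt hc1 (by omega) (by simp [hlen]; omega)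
      rw [getD_take (by omega) (by omega), getD_take (by omega) (by omega)] at h1
      have := hbound (i - 1) (by omega)
      omega
    · have h1 : (ρ.drop (p + 1)).getD (i - (p + 1) - 1) 0 <
          (ρ.drop (p + 1)).getD (i - (p + 1)) 0 :=
        chain'_getD_lt hc2 (by omega) (by simp [hlen]; omega)
      rw [getD_drop (by omega), getD_drop (by omega)] at h1
      rw [show p + 1 + (i - (p + 1)) = i from by omega,
        show p + 1 + (i - (p + 1) - 1) = i - 1 from by omega] at h1
      have := hbound (i - 1) (by omega)
      omega
  rcases hcases with rfl | rfl
  · -- head is 1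
    left
    obtain ⟨r0, t, rfl⟩ : ∃ r0 t, ρ = r0 :: t := by
      cases ρ with
      | nil => simp at hi
      | cons r0 t => exact ⟨r0, t, rfl⟩
    have hr0 : r0 = 1 := by simpa using hρi
    subst hr0
    have ht2 : ∀ x ∈ t, 2 ≤ x := by
      intro x hx
      have h1 : 1 ≤ x := (perm_mem_bound hperm (by simp [hx])).1
      have : x ≠ 1 := by
        rintro rfl
        exact (List.nodup_cons.mp hnodup).1 hx
      omega
    have hmap : (t.map (· - 1)).map (· + 1) = t := by
      rw [List.map_map]
      conv_rhs => rw [← List.map_id t]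
      apply List.map_congr_left
      intro x hx
      have := ht2 x hx
      simp
      omega
    have hperm' : (t.map (· - 1)).Perm (List.range' 1 (p + (q + 1))) := by
      have h3 : (1 :: t).Perm (1 :: List.range' 2 (p + (q + 1))) := by
        have := hperm
        rwa [show p + 1 + (q + 1) = (p + (q + 1)) + 1 from by omega, List.range'_succ] at this
      have h4 : t.Perm (List.range' 2 (p + (q + 1))) := (List.perm_cons 1).mp h3
      have := h4.map (· - 1)
      rwa [map_sub_one_range'] at this
    refine ⟨t.map (· - 1), mem_shuffles.mpr ⟨hperm', ?_, ?_⟩, by rw [hmap]⟩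
    · rw [← List.map_take]
      apply chain'_map_sub_one
      · intro x hx
        have := ht2 x (List.mem_of_mem_take hx)
        omega
      · have := hc1
        rw [List.take_succ_cons] at this
        exact this.tail
    · rw [← List.map_drop]
      apply chain'_map_sub_one
      · intro x hx
        have := ht2 x (List.mem_of_mem_drop hx)
        omega
      · have := hc2
        rwa [List.drop_succ_cons] at this
  · -- the 1 sits at position p+1
    right
    have hd : ρ.drop (p + 1) = 1 :: ρ.drop (p + 2) := by
      have h5 := List.getElem_cons_drop hi
      rw [hρi] at h5
      rw [← h5]
    have hsplit : ρ = ρ.take (p + 1) ++ 1 :: ρ.drop (p + 2) := by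
      rw [← hd, List.take_append_drop]
    set A := ρ.take (p + 1) with hA
    set B := ρ.drop (p + 2) with hB
    have hAl : A.length = p + 1 := by simp [hA, hlen]
    have h1AB : (1 : ℕ) ∉ A ++ B := by
      rw [hsplit] at hnodup
      exact (List.nodup_cons.mp (List.nodup_middle.mp hnodup)).1
    have ht2 : ∀ x ∈ A ++ B, 2 ≤ x := by
      intro x hx
      have hxρ : x ∈ ρ := by
        rw [hsplit]
        rcases List.mem_append.mp hx with h | h
        · exact List.mem_append_left _ h
        · exact List.mem_append_right _ (List.mem_cons_of_mem _ h)
      have h1 : 1 ≤ x := (perm_mem_bound hperm hxρ).1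
      have : x ≠ 1 := fun h => h1AB (h ▸ hx)
      omega
    have hmap : ((A ++ B).map (· - 1)).map (· + 1) = A ++ B := by
      rw [List.map_map]
      conv_rhs => rw [← List.map_id (A ++ B)]
      apply List.map_congr_left
      intro x hx
      have := ht2 x hx
      simp
      omega
    have hperm' : ((A ++ B).map (· - 1)).Perm (List.range' 1 (p + 1 + q)) := by
      have h3 : (A ++ 1 :: B).Perm (1 :: (A ++ B)) := List.perm_middle
      have h4 : (1 :: (A ++ B)).Perm (1 :: List.range' 2 (p + 1 + q)) := by
        refine h3.symm.trans ?_
        rw [← hsplit]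
        have := hperm
        rwa [show p + 1 + (q + 1) = (p + 1 + q) + 1 from by omega, List.range'_succ] at this
      have h5 := (List.perm_cons 1).mp h4
      have := h5.map (· - 1)
      rwa [map_sub_one_range'] at this
    refine ⟨(A ++ B).map (· - 1), mem_shuffles.mpr ⟨hperm', ?_, ?_⟩, ?_⟩
    · rw [← List.map_take]
      apply chain'_map_sub_one
      · intro x hx
        have := ht2 x (List.mem_of_mem_take hx)
        omega
      · have htake : (A ++ B).take (p + 1) = A := List.take_left' hAl
        rw [htake]
        exact hc1
    · rw [← List.map_drop]
      apply chain'_map_sub_one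
      · intro x hx
        have := ht2 x (List.mem_of_mem_drop hx)
        omega
      · have hdrop : (A ++ B).drop (p + 1) = B := List.drop_left' hAl
        rw [hdrop]
        have := hc2
        rw [hd] at this
        exact this.tail
    · rw [hmap, List.take_left' hAl, List.drop_left' hAl]
      exact hsplit

lemma shuffles_succ_succ (p q : ℕ) :
    shuffles (p + 1) (q + 1)
      = ((shuffles p (q + 1)).image (fun π => 1 :: π.map (· + 1))) ∪
        ((shuffles (p + 1) q).image
          (fun π => (π.map (· + 1)).take (p + 1) ++ 1 :: (π.map (· + 1)).drop (p + 1))) := by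
  ext ρ
  simp only [Finset.mem_union, Finset.mem_image]
  constructor
  · intro h
    rcases shuffles_succ_subset h with ⟨π, hm, rfl⟩ | ⟨π, hm, rfl⟩
    · exact Or.inl ⟨π, hm, rfl⟩
    · exact Or.inr ⟨π, hm, rfl⟩
  · rintro (⟨π, hm, rfl⟩ | ⟨π, hm, rfl⟩)
    · exact e1_mem hm
    · exact e2_mem hm

lemma shuffles_images_disjoint (p q : ℕ) :
    Disjoint ((shuffles p (q + 1)).image (fun π => 1 :: π.map (· + 1)))
      ((shuffles (p + 1) q).image
        (fun π => (π.map (· + 1)).take (p + 1) ++ 1 :: (π.map (· + 1)).drop (p + 1))) := by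
  rw [Finset.disjoint_left]
  rintro w hw1 hw2
  obtain ⟨π₁, h1, rfl⟩ := Finset.mem_image.mp hw1
  obtain ⟨π₂, h2, heq⟩ := Finset.mem_image.mp hw2
  have hperm2 := (mem_shuffles.mp h2).1
  have hl2 : π₂.length = p + 1 + q := perm_length hperm2
  have hQ := congrArg (fun l : List ℕ => l.getD 0 0) heq
  simp only at hQ
  have htl2 : ((π₂.map (· + 1)).take (p + 1)).length = p + 1 := by
    simp [hl2]
  rw [List.getD_append _ _ _ _ (by omega)] at hQ
  rw [getD_take (by omega) (by simp [hl2])] at hQ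
  have h2' : (π₂.map (· + 1)).getD 0 0 = π₂.getD 0 0 + 1 := by
    rw [List.getD_eq_getElem _ _ (by simp [hl2]), List.getElem_map,
      List.getD_eq_getElem _ _ (by omega)]
  rw [h2'] at hQ
  simp only [List.getD_cons_zero] at hQ
  have hmem := perm_mem_bound hperm2 (List.getElem_mem (l := π₂) (n := 0) (by omega))
  have : 1 ≤ π₂.getD 0 0 := by
    rw [List.getD_eq_getElem _ _ (by omega)]
    exact hmem.1
  omega

lemma e1_inj {p q : ℕ} : ∀ π₁ ∈ shuffles p (q + 1), ∀ π₂ ∈ shuffles p (q + 1),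
    (1 :: π₁.map (· + 1)) = (1 :: π₂.map (· + 1)) → π₁ = π₂ := by
  intro π₁ _ π₂ _ h
  have h2 := List.cons_injective h
  exact List.map_injective_iff.mpr (fun a b hab => by omega) h2

lemma e2_inj {p q : ℕ} : ∀ π₁ ∈ shuffles (p + 1) q, ∀ π₂ ∈ shuffles (p + 1) q,
    ((π₁.map (· + 1)).take (p + 1) ++ 1 :: (π₁.map (· + 1)).drop (p + 1))
      = ((π₂.map (· + 1)).take (p + 1) ++ 1 :: (π₂.map (· + 1)).drop (p + 1)) → π₁ = π₂ := by
  intro π₁ h1 π₂ h2 heq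
  have l1 : π₁.length = p + 1 + q := perm_length (mem_shuffles.mp h1).1
  have l2 : π₂.length = p + 1 + q := perm_length (mem_shuffles.mp h2).1
  have t1 : ((π₁.map (· + 1)).take (p + 1)).length = p + 1 := by simp [l1]
  have t2 : ((π₂.map (· + 1)).take (p + 1)).length = p + 1 := by simp [l2]
  obtain ⟨hA, hB⟩ := List.append_inj heq (t1.trans t2.symm)
  have hB' := List.cons_injective hB
  have hu : π₁.map (· + 1) = π₂.map (· + 1) := by
    conv_lhs => rw [← List.take_append_drop (p + 1) (π₁.map (· + 1))]
    conv_rhs => rw [← List.take_append_drop (p + 1) (π₂.map (· + 1))]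
    rw [hA, hB']
  exact List.map_injective_iff.mpr (fun a b hab => by omega) hu

/-! ### Sign and word transport along the recursion -/

lemma sgnw_e1 (π : List ℕ) : sgnw (1 :: π.map (· + 1)) = sgnw π := by
  rw [sgnw, sgnw, inversions_cons_one _ (fun x hx => ?_), inversions_map_add_one]
  obtain ⟨y, -, rfl⟩ := List.mem_map.mp hx
  omega

lemma sgnw_e2 {p q : ℕ} {π : List ℕ} (hπ : π ∈ shuffles (p + 1) q) :
    sgnw ((π.map (· + 1)).take (p + 1) ++ 1 :: (π.map (· + 1)).drop (p + 1))
      = (-1) ^ (p + 1) * sgnw π := by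
  have hperm := (mem_shuffles.mp hπ).1
  have hlen : π.length = p + 1 + q := perm_length hperm
  have h2 : ∀ x ∈ (π.map (· + 1)).take (p + 1) ++ (π.map (· + 1)).drop (p + 1), 2 ≤ x := by
    rw [List.take_append_drop]
    intro x hx
    obtain ⟨y, hy, rfl⟩ := List.mem_map.mp hx
    have := (perm_mem_bound hperm hy).1
    omega
  rw [sgnw, sgnw, inversions_insert_one _ _ h2, List.take_append_drop, inversions_map_add_one]
  have hlt : ((π.map (· + 1)).take (p + 1)).length = p + 1 := by simp [hlen]
  rw [hlt, pow_add]
  ring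

lemma compw_cons_e1 (a : ℕ) (l y π : List ℕ) (hlen : π.length = l.length + y.length) :
    compw ((a :: l) ++ y) (invw (1 :: π.map (· + 1))) = a :: compw (l ++ y) (invw π) := by
  apply List.ext_getElem
  · simp [compw_length, invw_length, hlen]
  intro i h1 h2
  rw [← List.getD_eq_getElem _ 0 h1, ← List.getD_eq_getElem _ 0 h2]
  have hi : i < π.length + 1 := by
    simpa [compw_length, invw_length] using h1
  rw [compw_invw_getD _ _ (by simpa using hi)]
  cases i with
  | zero =>
    rw [List.idxOf_cons_self]
    simp
  | succ j =>
    have hj : j < π.length := by omega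
    rw [List.idxOf_cons_ne _ (by omega), indexOf_map_add_one]
    rw [List.cons_append, List.getD_cons_succ, List.getD_cons_succ,
      compw_invw_getD _ _ hj]

lemma compw_cons_e2 (a b : ℕ) (l m π : List ℕ)
    (hπ : π.Perm (List.range' 1 (l.length + 1 + m.length))) :
    compw ((a :: l) ++ (b :: m))
        (invw ((π.map (· + 1)).take (l.length + 1) ++ 1 :: (π.map (· + 1)).drop (l.length + 1)))
      = b :: compw ((a :: l) ++ m) (invw π) := by
  set p := l.length + 1 with hp
  set u := π.map (· + 1) with hu
  have hπl : π.length = l.length + 1 + m.length := perm_length hπ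
  have hul : u.length = l.length + 1 + m.length := by simp [hu, hπl]
  set w := u.take p ++ 1 :: u.drop p with hw
  have hAl : (u.take p).length = p := by rw [List.length_take, hul]; omega
  have hwl : w.length = π.length + 1 := by
    simp [hw, hul, hπl]
    omega
  have hwperm : w.Perm (List.range' 1 (π.length + 1)) := by
    have h2 : w.Perm (1 :: u) := by
      have := List.perm_middle (a := 1) (l₁ := u.take p) (l₂ := u.drop p)
      rwa [List.take_append_drop] at this
    refine h2.trans ?_
    have h1 : u.Perm (List.range' 2 π.length) := by
      have := hπ.map (· + 1)
      rw [map_add_one_range'] at this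
      rwa [hπl]
    rw [List.range'_succ]
    exact h1.cons 1
  have hwnodup : w.Nodup := perm_nodup hwperm
  have hidx1 : w.idxOf 1 = p := by
    have hg : w[p]'(by omega) = 1 := by
      simp only [hw]
      rw [List.getElem_append_right (by omega)]
      simp [hAl]
    rw [← hg, List.Nodup.idxOf_getElem hwnodup]
  have hidxv : ∀ j, j < π.length → w.idxOf (j + 1 + 1)
      = (if π.idxOf (j + 1) < p then π.idxOf (j + 1) else π.idxOf (j + 1) + 1) := by
    intro j hj
    have hmem : (j + 1) ∈ π := by
      rw [hπ.mem_iff]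
      simp [List.mem_range'_1]
      omega
    have hk : π.idxOf (j + 1) < π.length := List.idxOf_lt_length_iff.mpr hmem
    have hupk : u[π.idxOf (j + 1)]'(by omega) = j + 1 + 1 := by
      simp only [hu, List.getElem_map]
      rw [List.getElem_idxOf hk]
    by_cases hkp : π.idxOf (j + 1) < p
    · have hwk : w[π.idxOf (j + 1)]'(by omega) = j + 1 + 1 := by
        simp only [hw]
        rw [List.getElem_append_left (by omega)]
        simp only [List.getElem_take]
        exact hupk
      rw [← hwk, List.Nodup.idxOf_getElem hwnodup, if_pos hkp]
    · have hwk : w[π.idxOf (j + 1) + 1]'(by omega) = j + 1 + 1 := by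
        simp only [hw]
        rw [List.getElem_append_right (by omega)]
        have e1 : π.idxOf (j + 1) + 1 - (u.take p).length = (π.idxOf (j + 1) - p) + 1 := by
          rw [hAl]; omega
        simp only [e1, List.getElem_cons_succ, List.getElem_drop]
        have e2 : p + (π.idxOf (j + 1) - p) = π.idxOf (j + 1) := by omega
        simp only [e2]
        exact hupk
      rw [← hwk, List.Nodup.idxOf_getElem hwnodup, if_neg hkp]
  apply List.ext_getElem
  · simp [compw_length, invw_length, hwl, hπl]
  intro i h1 h2
  rw [← List.getD_eq_getElem _ 0 h1, ← List.getD_eq_getElem _ 0 h2]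
  have hi : i < w.length := by
    simpa [compw_length, invw_length] using h1
  rw [compw_invw_getD _ _ hi]
  cases i with
  | zero =>
    rw [hidx1]
    rw [List.getD_append_right _ _ _ _ (by simp [hp])]
    simp [hp]
  | succ j =>
    have hj : j < π.length := by
      rw [hwl] at hi
      omega
    rw [hidxv j hj, List.getD_cons_succ, compw_invw_getD _ _ hj]
    have hk : π.idxOf (j + 1) < π.length :=
      List.idxOf_lt_length_iff.mpr (by rw [hπ.mem_iff]; simp [List.mem_range'_1]; omega)
    by_cases hkp : π.idxOf (j + 1) < p
    · rw [if_pos hkp]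
      rw [List.getD_append _ _ _ _ (by simp [hp]; omega),
        List.getD_append _ _ _ _ (by simp [hp]; omega)]
    · rw [if_neg hkp]
      rw [List.getD_append_right _ _ _ _ (by simp [hp]; omega),
        List.getD_append_right _ _ _ _ (by simp [hp]; omega)]
      have e3 : π.idxOf (j + 1) + 1 - (a :: l).length
          = (π.idxOf (j + 1) - (a :: l).length) + 1 := by
        simp [hp] at hkp ⊢
        omega
      rw [e3, List.getD_cons_succ]

/-! ### The sum over shuffles equals the recursive sum -/

noncomputable def aw (K : Type*) [Field K] (x y : List ℕ) : List ℕ →₀ K :=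
  ∑ π ∈ shuffles x.length y.length,
    ((sgnw π : K)) • Finsupp.single (compw (x ++ y) (invw π)) (1 : K)

lemma shufF_eq_aw (K : Type*) [Field K] (σ τ : List ℕ) :
    shufF K σ τ = aw K σ (τ.map (· + σ.length)) := by
  rw [shufF, aw, List.length_map]
  apply Finset.sum_congr rfl
  intro π _
  rw [Int.cast_smul_eq_zsmul]
  rfl

lemma aw_nil_left (K : Type*) [Field K] (y : List ℕ) :
    aw K [] y = Finsupp.single y 1 := by
  rw [aw]
  have h0 : ([] : List ℕ).length = 0 := rfl
  rw [h0, shuffles_zero_left, Finset.sum_singleton, invw_self, List.nil_append, compw_self,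
    sgnw, inversions_range']
  simp

lemma aw_nil_right (K : Type*) [Field K] (x : List ℕ) :
    aw K x [] = Finsupp.single x 1 := by
  rw [aw]
  have h0 : ([] : List ℕ).length = 0 := rfl
  rw [h0, shuffles_zero_right, Finset.sum_singleton, invw_self, List.append_nil, compw_self,
    sgnw, inversions_range']
  simp

lemma aw_cons_cons (K : Type*) [Field K] (a b : ℕ) (l m : List ℕ) :
    aw K (a :: l) (b :: m)
      = cnsF K a (aw K l (b :: m)) + ((-1 : K) ^ (l.length + 1)) • cnsF K b (aw K (a :: l) m) := by
  rw [aw]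
  simp only [List.length_cons]
  rw [shuffles_succ_succ, Finset.sum_union (shuffles_images_disjoint _ _),
    Finset.sum_image e1_inj, Finset.sum_image e2_inj]
  congr 1
  · -- e1 part
    rw [aw, cnsF_finset_sum]
    apply Finset.sum_congr rfl
    intro π hπ
    have hlen : π.length = l.length + (m.length + 1) :=
      perm_length (mem_shuffles.mp hπ).1
    rw [sgnw_e1, compw_cons_e1 a l (b :: m) π (by simpa using hlen)]
    rw [cnsF_smul, cnsF_single]
  · -- e2 part
    rw [aw]
    simp only [List.length_cons]
    rw [cnsF_finset_sum, Finset.smul_sum]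
    apply Finset.sum_congr rfl
    intro π hπ
    have hperm := (mem_shuffles.mp hπ).1
    rw [sgnw_e2 hπ, compw_cons_e2 a b l m π (by simpa using hperm)]
    rw [cnsF_smul, cnsF_single, smul_smul]
    push_cast
    ring_nf

lemma aw_eq_ssum (K : Type*) [Field K] : ∀ x y : List ℕ, aw K x y = ssum K x y := by
  suffices h : ∀ (N : ℕ) (x y : List ℕ), x.length + y.length ≤ N → aw K x y = ssum K x y from
    fun x y => h (x.length + y.length) x y le_rfl
  intro N
  induction N with
  | zero =>
    intro x y h
    match x, y with
    | [], y => rw [aw_nil_left, ssum_nil_left]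
    | a :: l, y => simp at h
  | succ N ih =>
    intro x y h
    match x, y with
    | [], y => rw [aw_nil_left, ssum_nil_left]
    | a :: l, [] => rw [aw_nil_right, ssum_nil_right]
    | a :: l, b :: m =>
      rw [aw_cons_cons, ssum_cons_cons]
      simp only [List.length_cons] at h
      rw [ih l (b :: m) (by simp; omega), ih (a :: l) m (by simp; omega)]

/-! ### Bilinear extensions of the recursive sum -/

lemma cnsF_def (K : Type*) [Field K] (a : ℕ) (f : List ℕ →₀ K) :
    cnsF K a f = Finsupp.mapDomain (a :: ·) f := rfl

lemma cnsF_finsupp_sum (K : Type*) [Field K] (a : ℕ) (f : List ℕ →₀ K)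
    (g : List ℕ → K → (List ℕ →₀ K)) :
    cnsF K a (f.sum g) = f.sum fun w d => cnsF K a (g w d) :=
  map_sum (cnsHom K a) _ _

lemma ssum_support_length (K : Type*) [Field K] :
    ∀ x y : List ℕ, ∀ w ∈ (ssum K x y).support, w.length = x.length + y.length
  | [], m => by
    intro w hw
    rw [ssum_nil_left] at hw
    have h := Finsupp.support_single_subset hw
    simp only [Finset.mem_singleton] at h
    subst h
    simp
  | a :: l, [] => by
    intro w hw
    rw [ssum_nil_right] at hw
    have h := Finsupp.support_single_subset hw
    simp only [Finset.mem_singleton] at h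
    subst h
    simp
  | a :: l, b :: m => by
    intro w hw
    rw [ssum_cons_cons] at hw
    classical
    rcases Finset.mem_union.mp (Finsupp.support_add hw) with h | h
    · rw [cnsF_def] at h
      obtain ⟨w', hw', rfl⟩ := Finset.mem_image.mp (Finsupp.mapDomain_support h)
      have hlen := ssum_support_length K l (b :: m) w' hw'
      simp only [List.length_cons] at hlen ⊢
      omega
    · have h2 := Finsupp.support_smul h
      rw [cnsF_def] at h2
      obtain ⟨w', hw', rfl⟩ := Finset.mem_image.mp (Finsupp.mapDomain_support h2)
      have hlen := ssum_support_length K (a :: l) m w' hw'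
      simp only [List.length_cons] at hlen ⊢
      omega
  termination_by x y => x.length + y.length
  decreasing_by all_goals (simp <;> omega)

lemma ssum_map (K : Type*) [Field K] (c : ℕ) :
    ∀ x y : List ℕ, ssum K (x.map (· + c)) (y.map (· + c))
      = Finsupp.mapDomain (List.map (· + c)) (ssum K x y)
  | [], m => by
    rw [ssum_nil_left, List.map_nil, ssum_nil_left, Finsupp.mapDomain_single]
  | a :: l, [] => by
    rw [ssum_nil_right, List.map_nil, ssum_nil_right, Finsupp.mapDomain_single]
  | a :: l, b :: m => by
    rw [List.map_cons, List.map_cons, ssum_cons_cons, ssum_cons_cons,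
      Finsupp.mapDomain_add, Finsupp.mapDomain_smul]
    congr 1
    · rw [show ((b + c) :: m.map (· + c)) = (b :: m).map (· + c) from rfl]
      rw [ssum_map K c l (b :: m)]
      rw [cnsF_def, cnsF_def, ← Finsupp.mapDomain_comp, ← Finsupp.mapDomain_comp]
      congr 1
    · rw [List.length_map]
      congr 1
      rw [show ((a + c) :: l.map (· + c)) = (a :: l).map (· + c) from rfl]
      rw [ssum_map K c (a :: l) m]
      rw [cnsF_def, cnsF_def, ← Finsupp.mapDomain_comp, ← Finsupp.mapDomain_comp]
      congr 1
  termination_by x y => x.length + y.length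
  decreasing_by all_goals (simp <;> omega)

noncomputable def tl (K : Type*) [Field K] (f : List ℕ →₀ K) (z : List ℕ) : List ℕ →₀ K :=
  f.sum fun w c => c • ssum K w z

noncomputable def tr (K : Type*) [Field K] (x : List ℕ) (f : List ℕ →₀ K) : List ℕ →₀ K :=
  f.sum fun w c => c • ssum K x w

variable (K : Type*) [Field K]

lemma tl_add (f g : List ℕ →₀ K) (z : List ℕ) : tl K (f + g) z = tl K f z + tl K g z :=
  Finsupp.sum_add_index' (fun _ => zero_smul K _) (fun _ b1 b2 => add_smul b1 b2 _)

lemma tr_add (x : List ℕ) (f g : List ℕ →₀ K) : tr K x (f + g) = tr K x f + tr K x g :=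
  Finsupp.sum_add_index' (fun _ => zero_smul K _) (fun _ b1 b2 => add_smul b1 b2 _)

lemma tl_smul (c : K) (f : List ℕ →₀ K) (z : List ℕ) : tl K (c • f) z = c • tl K f z := by
  rw [tl, tl, Finsupp.sum_smul_index (fun i => zero_smul K (ssum K i z)), Finsupp.smul_sum]
  apply Finsupp.sum_congr
  intro w _
  rw [mul_smul]

lemma tr_smul (x : List ℕ) (c : K) (f : List ℕ →₀ K) : tr K x (c • f) = c • tr K x f := by
  rw [tr, tr, Finsupp.sum_smul_index (fun i => zero_smul K (ssum K x i)), Finsupp.smul_sum]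
  apply Finsupp.sum_congr
  intro w _
  rw [mul_smul]

lemma tl_single (w : List ℕ) (c : K) (z : List ℕ) :
    tl K (Finsupp.single w c) z = c • ssum K w z :=
  Finsupp.sum_single_index (zero_smul K _)

lemma tr_single (x w : List ℕ) (c : K) :
    tr K x (Finsupp.single w c) = c • ssum K x w :=
  Finsupp.sum_single_index (zero_smul K _)

lemma tl_cns (a : ℕ) (f : List ℕ →₀ K) (z : List ℕ) :
    tl K (cnsF K a f) z = f.sum fun w c => c • ssum K (a :: w) z := by
  rw [tl, cnsF_def, Finsupp.sum_mapDomain_index_inj List.cons_injective]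

lemma tr_cns (x : List ℕ) (b : ℕ) (f : List ℕ →₀ K) :
    tr K x (cnsF K b f) = f.sum fun w c => c • ssum K x (b :: w) := by
  rw [tr, cnsF_def, Finsupp.sum_mapDomain_index_inj List.cons_injective]

lemma tl_nil (f : List ℕ →₀ K) : tl K f [] = f := by
  rw [tl]
  have h : (f.sum fun w c => c • ssum K w []) = f.sum fun w c => Finsupp.single w c := by
    apply Finsupp.sum_congr
    intro w _
    rw [ssum_nil_right, Finsupp.smul_single', mul_one]
  rw [h, Finsupp.sum_single]

lemma tr_nil (f : List ℕ →₀ K) : tr K [] f = f := by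
  rw [tr]
  have h : (f.sum fun w c => c • ssum K [] w) = f.sum fun w c => Finsupp.single w c := by
    apply Finsupp.sum_congr
    intro w _
    rw [ssum_nil_left, Finsupp.smul_single', mul_one]
  rw [h, Finsupp.sum_single]

lemma tl_cns_cons (a c : ℕ) (z : List ℕ) (f : List ℕ →₀ K) (n : ℕ)
    (hf : ∀ w ∈ f.support, w.length = n) :
    tl K (cnsF K a f) (c :: z)
      = cnsF K a (tl K f (c :: z)) + ((-1 : K) ^ (n + 1)) • cnsF K c (tl K (cnsF K a f) z) := by
  rw [tl_cns]
  have step1 : (f.sum fun w d => d • ssum K (a :: w) (c :: z))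
      = f.sum fun w d => (d • cnsF K a (ssum K w (c :: z))
          + ((-1 : K) ^ (n + 1)) • (d • cnsF K c (ssum K (a :: w) z))) := by
    apply Finsupp.sum_congr
    intro w hw
    rw [ssum_cons_cons, hf w hw, smul_add, smul_comm (f w) ((-1 : K) ^ (n + 1))]
  rw [step1, Finsupp.sum_add]
  congr 1
  · rw [tl, cnsF_finsupp_sum]
    apply Finsupp.sum_congr
    intro w _
    rw [cnsF_smul]
  · rw [← Finsupp.smul_sum]
    congr 1
    rw [tl_cns, cnsF_finsupp_sum]
    apply Finsupp.sum_congr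
    intro w _
    rw [cnsF_smul]

lemma tr_cons_cns (a b : ℕ) (x : List ℕ) (h : List ℕ →₀ K) :
    tr K (a :: x) (cnsF K b h)
      = cnsF K a (tr K x (cnsF K b h))
        + ((-1 : K) ^ (x.length + 1)) • cnsF K b (tr K (a :: x) h) := by
  rw [tr_cns]
  have step1 : (h.sum fun w d => d • ssum K (a :: x) (b :: w))
      = h.sum fun w d => (d • cnsF K a (ssum K x (b :: w))
          + ((-1 : K) ^ (x.length + 1)) • (d • cnsF K b (ssum K (a :: x) w))) := by
    apply Finsupp.sum_congr
    intro w hw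
    rw [ssum_cons_cons, smul_add, smul_comm (h w) ((-1 : K) ^ (x.length + 1))]
  rw [step1, Finsupp.sum_add]
  congr 1
  · rw [tr_cns, cnsF_finsupp_sum]
    apply Finsupp.sum_congr
    intro w _
    rw [cnsF_smul]
  · rw [← Finsupp.smul_sum]
    congr 1
    rw [tr, cnsF_finsupp_sum]
    apply Finsupp.sum_congr
    intro w _
    rw [cnsF_smul]

lemma tl_rec (a b c : ℕ) (x y z : List ℕ) :
    tl K (ssum K (a :: x) (b :: y)) (c :: z)
      = cnsF K a (tl K (ssum K x (b :: y)) (c :: z))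
        + ((-1 : K) ^ (x.length + 1)) • cnsF K b (tl K (ssum K (a :: x) y) (c :: z))
        + (((-1 : K) ^ (x.length + 1)) * ((-1 : K) ^ (y.length + 1))) •
            cnsF K c (tl K (ssum K (a :: x) (b :: y)) z) := by
  have n1 : ∀ w ∈ (ssum K x (b :: y)).support, w.length = x.length + y.length + 1 := by
    intro w hw
    have h := ssum_support_length K x (b :: y) w hw
    simp only [List.length_cons] at h
    omega
  have n2 : ∀ w ∈ (ssum K (a :: x) y).support, w.length = x.length + y.length + 1 := by
    intro w hw
    have h := ssum_support_length K (a :: x) y w hw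
    simp only [List.length_cons] at h
    omega
  conv_lhs => rw [ssum_cons_cons]
  rw [tl_add, tl_smul]
  rw [tl_cns_cons K a c z _ _ n1, tl_cns_cons K b c z _ _ n2]
  conv_rhs => rw [ssum_cons_cons K a b x y, tl_add, tl_smul]
  rw [cnsF_add, cnsF_smul]
  have he : ((-1 : K) ^ (x.length + y.length + 1 + 1))
      = ((-1 : K) ^ (x.length + 1)) * ((-1 : K) ^ (y.length + 1)) := by
    rw [← pow_add]
    congr 1
    omega
  rw [he]
  module

lemma tr_rec (a b c : ℕ) (x y z : List ℕ) :
    tr K (a :: x) (ssum K (b :: y) (c :: z))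
      = cnsF K a (tr K x (ssum K (b :: y) (c :: z)))
        + ((-1 : K) ^ (x.length + 1)) • cnsF K b (tr K (a :: x) (ssum K y (c :: z)))
        + (((-1 : K) ^ (x.length + 1)) * ((-1 : K) ^ (y.length + 1))) •
            cnsF K c (tr K (a :: x) (ssum K (b :: y) z)) := by
  conv_lhs => rw [ssum_cons_cons]
  rw [tr_add, tr_smul, tr_cons_cns, tr_cons_cns]
  conv_rhs => rw [ssum_cons_cons K b c y z, tr_add, tr_smul]
  rw [cnsF_add, cnsF_smul]
  module

lemma assoc3 : ∀ (N : ℕ) (x y z : List ℕ), x.length + y.length + z.length ≤ N →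
    tl K (ssum K x y) z = tr K x (ssum K y z) := by
  intro N
  induction N with
  | zero =>
    intro x y z h
    match x, y, z with
    | [], y, z => rw [ssum_nil_left, tl_single, one_smul, tr_nil]
    | a :: x, y, z => simp only [List.length_cons] at h; omega
  | succ N ih =>
    intro x y z h
    match x, y, z with
    | [], y, z => rw [ssum_nil_left, tl_single, one_smul, tr_nil]
    | a :: x, [], z =>
      rw [ssum_nil_right, ssum_nil_left, tl_single, tr_single, one_smul]
    | a :: x, b :: y, [] =>
      rw [tl_nil, ssum_nil_right, tr_single, one_smul]
    | a :: x, b :: y, c :: z =>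
      simp only [List.length_cons] at h
      rw [tl_rec, tr_rec,
        ih x (b :: y) (c :: z) (by simp only [List.length_cons]; omega),
        ih (a :: x) y (c :: z) (by simp only [List.length_cons]; omega),
        ih (a :: x) (b :: y) z (by simp only [List.length_cons]; omega)]

end SPA

/-- the signed shuffle product `∇` on `⊕_n K[Σ_n]` is associative
(checked on basis elements, i.e. permutation words). -/
theorem shuffle_product_assoc (K : Type*) [Field K] (σ τ ρ : List ℕ)
    (hσ : IsPermWord σ) (hτ : IsPermWord τ) (hρ : IsPermWord ρ) :
    shufL K (shufL K (Finsupp.single σ (1 : K)) (Finsupp.single τ 1)) (Finsupp.single ρ 1)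
      = shufL K (Finsupp.single σ 1) (shufL K (Finsupp.single τ 1) (Finsupp.single ρ 1)) := by
  classical
  have h1 : ∀ (σ' : List ℕ) (g : List ℕ →₀ K),
      shufL K (Finsupp.single σ' 1) g = g.sum fun v d => d • shufF K σ' v := by
    intro σ' g
    rw [shufL, Finsupp.lsum_single, LinearMap.smulRight_apply, LinearMap.id_apply, one_smul,
      Finsupp.lsum_apply]
    apply Finsupp.sum_congr
    intro v _
    rw [LinearMap.smulRight_apply, LinearMap.id_apply]
  have h2 : ∀ (f : List ℕ →₀ K) (ρ' : List ℕ),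
      shufL K f (Finsupp.single ρ' 1) = f.sum fun w c => c • shufF K w ρ' := by
    intro f ρ'
    rw [shufL, Finsupp.lsum_apply]
    simp only [Finsupp.sum]
    rw [LinearMap.coe_sum, Finset.sum_apply]
    apply Finset.sum_congr rfl
    intro w _
    rw [LinearMap.smulRight_apply, LinearMap.id_apply, LinearMap.smul_apply,
      Finsupp.lsum_single, LinearMap.smulRight_apply, LinearMap.id_apply, one_smul]
  have hin1 : shufL K (Finsupp.single σ (1 : K)) (Finsupp.single τ 1) = shufF K σ τ := by
    rw [h1, Finsupp.sum_single_index (by rw [zero_smul]), one_smul]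
  have hin2 : shufL K (Finsupp.single τ (1 : K)) (Finsupp.single ρ 1) = shufF K τ ρ := by
    rw [h1, Finsupp.sum_single_index (by rw [zero_smul]), one_smul]
  rw [hin1, hin2, h1, h2]
  have hsf1 : shufF K σ τ = SPA.ssum K σ (τ.map (· + σ.length)) := by
    rw [SPA.shufF_eq_aw, SPA.aw_eq_ssum]
  have hsf2 : shufF K τ ρ = SPA.ssum K τ (ρ.map (· + τ.length)) := by
    rw [SPA.shufF_eq_aw, SPA.aw_eq_ssum]
  rw [hsf1, hsf2]
  have hL : ((SPA.ssum K σ (τ.map (· + σ.length))).sum fun w c => c • shufF K w ρ)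
      = SPA.tl K (SPA.ssum K σ (τ.map (· + σ.length)))
          ((ρ.map (· + τ.length)).map (· + σ.length)) := by
    rw [SPA.tl]
    apply Finsupp.sum_congr
    intro w hw
    have hwlen : w.length = σ.length + τ.length := by
      have h := SPA.ssum_support_length K σ (τ.map (· + σ.length)) w hw
      simpa using h
    rw [SPA.shufF_eq_aw, SPA.aw_eq_ssum, hwlen]
    have hlist : List.map (fun x => x + (σ.length + τ.length)) ρ
        = (ρ.map (· + τ.length)).map (· + σ.length) := by
      rw [List.map_map]
      apply List.map_congr_left
      intro v _
      simp only [Function.comp_apply]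
      omega
    rw [hlist]
  have hR : ((SPA.ssum K τ (ρ.map (· + τ.length))).sum fun v d => d • shufF K σ v)
      = SPA.tr K σ (SPA.ssum K (τ.map (· + σ.length))
          ((ρ.map (· + τ.length)).map (· + σ.length))) := by
    conv_rhs => rw [SPA.ssum_map K σ.length τ (ρ.map (· + τ.length))]
    rw [SPA.tr, Finsupp.sum_mapDomain_index_inj
      (List.map_injective_iff.mpr (fun a b hab => by omega))]
    apply Finsupp.sum_congr
    intro v _
    rw [SPA.shufF_eq_aw, SPA.aw_eq_ssum]
  rw [hL, hR]
  exact SPA.assoc3 K _ _ _ _ le_rfl
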